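/- For all integers 1 ≤ k ≤ n, the function B ↦ cot(𝒬_k(B)) is concave on Γ_I: for all Hermitian B, B' ∈ Γ_I and s ∈ [0,1], cot(𝒬_k(s B + (1−s) B')) ≥ s · cot(𝒬_k(B)) + (1−s) · cot(𝒬_k(B')). (For B ∈ Γ_I one has 𝒬_k(B) ∈ (0, π), so the cotangent is defined.) -/

import Mathlib

open Real

/-- `arccot x = π/2 - arctan x`, a strictly decreasing bijection from `ℝ` onto `(0, π)`. -/
noncomputable def arccot (x : ℝ) : ℝ := π / 2 - Real.arctan x

/-- `𝒬_{k,n}(λ)`: the maximum over subsets `J ⊆ {1,…,n}` with `|J| = k` of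
`∑_{j ∈ J} arccot (λ j)`. -/
noncomputable def Qfun (n k : ℕ) (lam : Fin n → ℝ) : ℝ :=
  sSup {x : ℝ | ∃ s : Finset (Fin n), s.card = k ∧ x = ∑ i ∈ s, arccot (lam i)}

open Matrix

set_option linter.unusedVariables false

lemma arccot_mem : ∀ x : ℝ, arccot x ∈ Set.Ioo 0 π := by
  intro x
  have h1 := Real.arctan_lt_pi_div_two x
  have h2 := Real.neg_pi_div_two_lt_arctan x
  constructor <;> [skip; skip] <;> unfold arccot <;> nlinarith [Real.pi_pos]

lemma cot_arccot (x : ℝ) : Real.cot (arccot x) = x := by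
  rw [Real.cot_eq_cos_div_sin]
  unfold arccot
  rw [Real.cos_pi_div_two_sub, Real.sin_pi_div_two_sub, ← Real.tan_eq_sin_div_cos,
    Real.tan_arctan]

lemma cot_anti {x y : ℝ} (hx : 0 < x) (hy : y < π) (hxy : x ≤ y) :
    Real.cos y / Real.sin y ≤ Real.cos x / Real.sin x := by
  have key : ∀ z : ℝ, 0 < z → z < π → Real.cos z / Real.sin z = Real.tan (π/2 - z) := by
    intro z _ _
    rw [Real.tan_eq_sin_div_cos, Real.sin_pi_div_two_sub, Real.cos_pi_div_two_sub]
  rw [key x hx (lt_of_le_of_lt hxy hy), key y (lt_of_lt_of_le hx hxy) hy]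
  have hmono := Real.strictMonoOn_tan
  have hx2 : π/2 - x ∈ Set.Ioo (-(π/2)) (π/2) := by
    constructor <;> nlinarith [lt_of_le_of_lt hxy hy]
  have hy2 : π/2 - y ∈ Set.Ioo (-(π/2)) (π/2) := by
    constructor <;> nlinarith [lt_of_lt_of_le hx hxy]
  rcases eq_or_lt_of_le hxy with h | h
  · subst h; exact le_refl _
  · exact le_of_lt (hmono hy2 hx2 (by linarith))

lemma cos_div_sin_arccot (x : ℝ) : Real.cos (arccot x) / Real.sin (arccot x) = x := by
  rw [← Real.cot_eq_cos_div_sin]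
  exact cot_arccot x

noncomputable def Hf (t u : ℝ) : ℝ := sin t ^ 2 * (cos u / sin u) - sin t * cos t

lemma Hf_pair {a b c d : ℝ} (ha : a ∈ Set.Ioo 0 π) (hb : b ∈ Set.Ioo 0 π)
    (hc : c ∈ Set.Ioo 0 π) (hd : d ∈ Set.Ioo 0 π) (hac : a + c < π) (hbd : b + d < π) :
    Hf (a + c) (b + d) ≤ Hf a b + Hf c d := by
  have sb : 0 < sin b := Real.sin_pos_of_pos_of_lt_pi hb.1 hb.2
  have sd : 0 < sin d := Real.sin_pos_of_pos_of_lt_pi hd.1 hd.2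
  have sbd : 0 < sin (b + d) := Real.sin_pos_of_pos_of_lt_pi (by linarith [hb.1, hd.1]) hbd
  have hk1 : cos (a + c) ≤ 1 := Real.cos_le_one _
  have hk2 : -1 ≤ cos (a + c) := Real.neg_one_le_cos _
  have key : 0 ≤ sin (a-b)^2 * sin d ^2 + sin (c-d)^2 * sin b^2
      - 2 * cos (a+c) * sin (a-b) * sin (c-d) * sin b * sin d := by
    nlinarith [sq_nonneg (sin (a-b) * sin d - sin (c-d) * sin b),
      sq_nonneg (sin (a-b) * sin d + sin (c-d) * sin b)]
  have hA : Hf a b + Hf c d - Hf (a+c) (b+d) =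
      ((sin a^2 * cos b - sin a * cos a * sin b) * (sin d * sin (b+d))
        + (sin c^2 * cos d - sin c * cos c * sin d) * (sin b * sin (b+d))
        - (sin (a+c)^2 * cos (b+d) - sin (a+c) * cos (a+c) * sin (b+d)) * (sin b * sin d))
        / (sin b * sin d * sin (b+d)) := by
    unfold Hf
    field_simp
  have hB : (sin a^2 * cos b - sin a * cos a * sin b) * (sin d * sin (b+d))
        + (sin c^2 * cos d - sin c * cos c * sin d) * (sin b * sin (b+d))
        - (sin (a+c)^2 * cos (b+d) - sin (a+c) * cos (a+c) * sin (b+d)) * (sin b * sin d) =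
      sin (a-b)^2 * sin d ^2 + sin (c-d)^2 * sin b^2
        - 2 * cos (a+c) * sin (a-b) * sin (c-d) * sin b * sin d := by
    rw [Real.sin_sub a b, Real.sin_sub c d, Real.sin_add a c, Real.cos_add a c,
      Real.sin_add b d, Real.cos_add b d]
    linear_combination (-(sin b^2*sin d^2) + 2*cos c^2*sin b^2*sin d^2
        + sin c*cos c*sin b*cos b*sin d^2 - sin c*cos c*sin b^2*sin d*cos d
        - sin c^2*sin b*cos b*sin d*cos d + sin c^2*sin b^2*sin d^2) * (Real.sin_sq_add_cos_sq a)
      + (sin b^2*sin d^2 - sin a*cos a*sin b*cos b*sin d^2 + sin a*cos a*sin b^2*sin d*cos d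
        - sin a^2*sin b*cos b*sin d*cos d - sin a^2*sin b^2*sin d^2) * (Real.sin_sq_add_cos_sq c)
  have hpos : 0 ≤ (Hf a b + Hf c d - Hf (a+c) (b+d)) := by
    rw [hA, hB]
    exact div_nonneg key (by positivity)
  linarith

lemma Hf_sum {ι : Type*} (t : Finset ι) (θ φ : ι → ℝ) (hne : t.Nonempty)
    (hθ : ∀ i ∈ t, θ i ∈ Set.Ioo 0 π) (hφ : ∀ i ∈ t, φ i ∈ Set.Ioo 0 π)
    (hsumθ : ∑ i ∈ t, θ i < π) (hsumφ : ∑ i ∈ t, φ i < π) :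
    Hf (∑ i ∈ t, θ i) (∑ i ∈ t, φ i) ≤ ∑ i ∈ t, Hf (θ i) (φ i) := by
  induction t using Finset.cons_induction with
  | empty => exact absurd hne (by simp)
  | cons a u ha ih =>
    rcases u.eq_empty_or_nonempty with h | hu
    · subst h; simp
    · rw [Finset.sum_cons] at hsumθ hsumφ ⊢
      rw [Finset.sum_cons, Finset.sum_cons]
      have hθa := hθ a (Finset.mem_cons_self a u)
      have hφa := hφ a (Finset.mem_cons_self a u)
      have hθu : ∀ i ∈ u, θ i ∈ Set.Ioo 0 π := fun i hi => hθ i (Finset.mem_cons_of_mem hi)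
      have hφu : ∀ i ∈ u, φ i ∈ Set.Ioo 0 π := fun i hi => hφ i (Finset.mem_cons_of_mem hi)
      have hsθpos : 0 < ∑ i ∈ u, θ i := Finset.sum_pos (fun i hi => (hθu i hi).1) hu
      have hsφpos : 0 < ∑ i ∈ u, φ i := Finset.sum_pos (fun i hi => (hφu i hi).1) hu
      have hsθlt : ∑ i ∈ u, θ i < π := by linarith [hθa.1]
      have hsφlt : ∑ i ∈ u, φ i < π := by linarith [hφa.1]
      have h1 := Hf_pair hθa hφa (Set.mem_Ioo.mpr ⟨hsθpos, hsθlt⟩)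
        (Set.mem_Ioo.mpr ⟨hsφpos, hsφlt⟩) hsumθ hsumφ
      have h2 := ih hu hθu hφu hsθlt hsφlt
      linarith

lemma Qfun_eq (n k : ℕ) (hkn : k ≤ n) (lam : Fin n → ℝ) :
    Qfun n k lam = ((Finset.univ.powersetCard k).image
      (fun s : Finset (Fin n) => ∑ i ∈ s, arccot (lam i))).max'
      (Finset.Nonempty.image (Finset.powersetCard_nonempty.mpr (by simpa)) _) := by
  have hset : {x : ℝ | ∃ s : Finset (Fin n), s.card = k ∧ x = ∑ i ∈ s, arccot (lam i)} =
      ↑((Finset.univ.powersetCard k).image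
        (fun s : Finset (Fin n) => ∑ i ∈ s, arccot (lam i))) := by
    ext x
    simp only [Set.mem_setOf_eq, Finset.coe_image, Set.mem_image, Finset.mem_coe,
      Finset.mem_powersetCard]
    constructor
    · rintro ⟨s, hs, rfl⟩; exact ⟨s, ⟨Finset.subset_univ s, hs⟩, rfl⟩
    · rintro ⟨s, ⟨_, hs⟩, rfl⟩; exact ⟨s, hs, rfl⟩
  rw [Qfun, hset, Finset.Nonempty.csSup_eq_max']

lemma exists_Qfun (n k : ℕ) (hkn : k ≤ n) (lam : Fin n → ℝ) :
    ∃ J : Finset (Fin n), J.card = k ∧ Qfun n k lam = ∑ i ∈ J, arccot (lam i) := by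
  rw [Qfun_eq n k hkn lam]
  have := Finset.max'_mem ((Finset.univ.powersetCard k).image
      (fun s : Finset (Fin n) => ∑ i ∈ s, arccot (lam i)))
      (Finset.Nonempty.image (Finset.powersetCard_nonempty.mpr (by simpa)) _)
  rw [Finset.mem_image] at this
  obtain ⟨J, hJ, hJ2⟩ := this
  exact ⟨J, (Finset.mem_powersetCard.mp hJ).2, hJ2.symm⟩

lemma le_Qfun (n k : ℕ) (hkn : k ≤ n) (lam : Fin n → ℝ) (J : Finset (Fin n)) (hJ : J.card = k) :
    ∑ i ∈ J, arccot (lam i) ≤ Qfun n k lam := by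
  rw [Qfun_eq n k hkn lam]
  apply Finset.le_max'
  exact Finset.mem_image.mpr ⟨J,
    Finset.mem_powersetCard.mpr ⟨Finset.subset_univ J, hJ⟩, rfl⟩

lemma permMatrix_entry {n : ℕ} (σ : Equiv.Perm (Fin n)) (i j : Fin n) :
    (σ.permMatrix ℝ) i j = if σ i = j then 1 else 0 := by
  rw [Equiv.Perm.permMatrix, PEquiv.toMatrix_apply]
  simp [Equiv.toPEquiv, eq_comm]

lemma ds_min {n : ℕ} (p : Matrix (Fin n) (Fin n) ℝ) (hp : p ∈ doublyStochastic ℝ (Fin n))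
    (c lam : Fin n → ℝ) (hc : ∀ i, 0 ≤ c i) :
    ∃ σ : Equiv.Perm (Fin n), ∑ i, c i * lam (σ i) ≤ ∑ i, c i * ∑ j, p i j * lam j := by
  obtain ⟨w, hw0, hw1, hwp⟩ := exists_eq_sum_perm_of_mem_doublyStochastic hp
  set f : Equiv.Perm (Fin n) → ℝ := fun σ => ∑ i, c i * lam (σ i) with hf
  obtain ⟨σ0, _, hσ0⟩ := Finset.exists_min_image Finset.univ f ⟨1, Finset.mem_univ 1⟩
  refine ⟨σ0, ?_⟩
  have hpij : ∀ i j, p i j = ∑ σ : Equiv.Perm (Fin n), w σ * (σ.permMatrix ℝ) i j := by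
    intro i j
    rw [← hwp]
    simp [Matrix.sum_apply, Matrix.smul_apply, smul_eq_mul]
  have h1 : ∀ (σ : Equiv.Perm (Fin n)) i, ∑ j, (σ.permMatrix ℝ) i j * lam j = lam (σ i) := by
    intro σ i
    simp [permMatrix_entry, Finset.sum_ite_eq, Equiv.toPEquiv_apply]
  have h2 : ∀ i, ∑ j, p i j * lam j = ∑ σ : Equiv.Perm (Fin n), w σ * lam (σ i) := by
    intro i
    simp_rw [hpij, Finset.sum_mul]
    rw [Finset.sum_comm]
    refine Finset.sum_congr rfl fun σ _ => ?_
    simp_rw [mul_assoc, ← Finset.mul_sum, h1]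
  have hval : ∑ i, c i * ∑ j, p i j * lam j = ∑ σ : Equiv.Perm (Fin n), w σ * f σ := by
    simp_rw [h2, Finset.mul_sum]
    rw [Finset.sum_comm]
    refine Finset.sum_congr rfl fun σ _ => ?_
    rw [hf, Finset.mul_sum]
    exact Finset.sum_congr rfl fun i _ => by ring
  rw [hval]
  calc f σ0 = ∑ σ : Equiv.Perm (Fin n), w σ * f σ0 := by
        rw [← Finset.sum_mul, hw1, one_mul]
    _ ≤ ∑ σ : Equiv.Perm (Fin n), w σ * f σ := by
        apply Finset.sum_le_sum
        intro σ _
        exact mul_le_mul_of_nonneg_left (hσ0 σ (Finset.mem_univ σ)) (hw0 σ)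

lemma bridge {n : ℕ} (U : Matrix (Fin n) (Fin n) ℂ) (hU : U ∈ Matrix.unitaryGroup (Fin n) ℂ)
    {B : Matrix (Fin n) (Fin n) ℂ} (hB : B.IsHermitian) (c : Fin n → ℝ) (hc : ∀ i, 0 ≤ c i) :
    ∃ σ : Equiv.Perm (Fin n),
      ∑ i, c i * hB.eigenvalues (σ i) ≤ ∑ i, c i * ((star U * B * U) i i).re := by
  set W := (hB.eigenvectorUnitary : Matrix (Fin n) (Fin n) ℂ) with hWdef
  have hW : W ∈ Matrix.unitaryGroup (Fin n) ℂ := (hB.eigenvectorUnitary).2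
  set V := star U * W with hVdef
  have hsV : star V = star W * U := by rw [hVdef, Matrix.star_mul, star_star]
  have hV1 : V * star V = 1 := by
    rw [hsV, hVdef, mul_assoc, ← mul_assoc W (star W) U,
      Matrix.mem_unitaryGroup_iff.mp hW, one_mul, Matrix.mem_unitaryGroup_iff'.mp hU]
  have hV2 : star V * V = 1 := by
    rw [hsV, hVdef, mul_assoc, ← mul_assoc U (star U) W,
      Matrix.mem_unitaryGroup_iff.mp hU, one_mul, Matrix.mem_unitaryGroup_iff'.mp hW]
  set p : Matrix (Fin n) (Fin n) ℝ := Matrix.of (fun i j => Complex.normSq (V i j)) with hpdef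
  have hrow : ∀ i, ∑ j, Complex.normSq (V i j) = 1 := by
    intro i
    have := congr_fun (congr_fun hV1 i) i
    rw [Matrix.mul_apply] at this
    simp only [Matrix.one_apply_eq] at this
    have : ((∑ j, Complex.normSq (V i j) : ℝ) : ℂ) = 1 := by
      rw [Complex.ofReal_sum]
      rw [← this]
      refine Finset.sum_congr rfl fun j _ => ?_
      rw [Matrix.star_apply, Complex.star_def, Complex.normSq_eq_conj_mul_self]
      ring
    exact_mod_cast this
  have hcol : ∀ j, ∑ i, Complex.normSq (V i j) = 1 := by
    intro j
    have := congr_fun (congr_fun hV2 j) j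
    rw [Matrix.mul_apply] at this
    simp only [Matrix.one_apply_eq] at this
    have : ((∑ i, Complex.normSq (V i j) : ℝ) : ℂ) = 1 := by
      rw [Complex.ofReal_sum]
      rw [← this]
      refine Finset.sum_congr rfl fun i _ => ?_
      rw [Matrix.star_apply, Complex.star_def, Complex.normSq_eq_conj_mul_self]
    exact_mod_cast this
  have hp : p ∈ doublyStochastic ℝ (Fin n) := by
    rw [mem_doublyStochastic_iff_sum]
    exact ⟨fun i j => Complex.normSq_nonneg _, hrow, hcol⟩
  have hdiag : ∀ i, ((star U * B * U) i i).re = ∑ j, p i j * hB.eigenvalues j := by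
    intro i
    have hspec : star U * B * U = V * diagonal (RCLike.ofReal ∘ hB.eigenvalues) * star V := by
      conv_lhs => rw [hB.spectral_theorem]
      rw [Unitary.conjStarAlgAut_apply, hsV, ← hWdef, hVdef]
      simp only [Matrix.mul_assoc]
    rw [hspec]
    rw [Matrix.mul_apply]
    rw [Complex.re_sum]
    refine Finset.sum_congr rfl fun j _ => ?_
    rw [Matrix.mul_diagonal]
    rw [Matrix.star_apply]
    have heq : V i j * (RCLike.ofReal ∘ hB.eigenvalues) j * star (V i j)
        = (hB.eigenvalues j : ℂ) * (Complex.normSq (V i j) : ℂ) := by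
      simp only [Function.comp_apply, Complex.star_def]
      rw [mul_comm (V i j), mul_assoc, Complex.mul_conj]
      push_cast
      rfl
    rw [heq, ← Complex.ofReal_mul, Complex.ofReal_re, hpdef]
    simp only [Matrix.of_apply]
    ring
  obtain ⟨σ, hσ⟩ := ds_min p hp c hB.eigenvalues hc
  refine ⟨σ, hσ.trans (le_of_eq ?_)⟩
  exact Finset.sum_congr rfl fun i _ => by rw [hdiag i]

lemma core {n : ℕ} (U : Matrix (Fin n) (Fin n) ℂ) (hU : U ∈ Matrix.unitaryGroup (Fin n) ℂ)
    {B : Matrix (Fin n) (Fin n) ℂ} (hB : B.IsHermitian)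
    (hGB : ∑ i, arccot (hB.eigenvalues i) < π)
    (ss : Finset (Fin n)) (hne : ss.Nonempty) (θ : Fin n → ℝ)
    (hθ : ∀ i ∈ ss, θ i ∈ Set.Ioo 0 π) (hsθ : ∑ i ∈ ss, θ i < π) :
    ∃ J : Finset (Fin n), J.card = ss.card ∧
      Hf (∑ i ∈ ss, θ i) (∑ j ∈ J, arccot (hB.eigenvalues j)) ≤
        ∑ i ∈ ss, (sin (θ i) ^ 2 * ((star U * B * U) i i).re - sin (θ i) * cos (θ i)) := by
  set c : Fin n → ℝ := fun i => if i ∈ ss then sin (θ i) ^ 2 else 0 with hcdef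
  have hc : ∀ i, 0 ≤ c i := by
    intro i; rw [hcdef]; dsimp only; split <;> positivity
  obtain ⟨σ, hσ⟩ := bridge U hU hB c hc
  have hrestr : ∀ f : Fin n → ℝ, ∑ i, c i * f i = ∑ i ∈ ss, sin (θ i) ^ 2 * f i := by
    intro f
    rw [← Finset.sum_filter_add_sum_filter_not Finset.univ (· ∈ ss) (fun i => c i * f i)]
    have h2 : ∑ i ∈ Finset.univ.filter (¬ · ∈ ss), c i * f i = 0 := by
      apply Finset.sum_eq_zero
      intro i hi
      rw [Finset.mem_filter] at hi
      simp [hcdef, hi.2]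
    rw [h2, add_zero]
    apply Finset.sum_congr
    · ext i; simp
    · intro i hi
      simp [hcdef, hi]
  refine ⟨ss.image σ, Finset.card_image_of_injective ss σ.injective, ?_⟩
  have himg : ∑ j ∈ ss.image σ, arccot (hB.eigenvalues j)
      = ∑ i ∈ ss, arccot (hB.eigenvalues (σ i)) :=
    Finset.sum_image (fun i _ j _ h => σ.injective h)
  rw [himg]
  have harccot_pos : ∀ x : ℝ, 0 < arccot x := fun x => (arccot_mem x).1
  have hsφ : ∑ i ∈ ss, arccot (hB.eigenvalues (σ i)) < π := by
    calc ∑ i ∈ ss, arccot (hB.eigenvalues (σ i))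
        = ∑ j ∈ ss.image σ, arccot (hB.eigenvalues j) := himg.symm
      _ ≤ ∑ j, arccot (hB.eigenvalues j) := Finset.sum_le_sum_of_subset_of_nonneg
          (Finset.subset_univ _) (fun j _ _ => (harccot_pos _).le)
      _ < π := hGB
  have hmain := Hf_sum ss θ (fun i => arccot (hB.eigenvalues (σ i))) hne hθ
    (fun i _ => arccot_mem _) hsθ hsφ
  refine hmain.trans ?_
  have hHf : ∀ i ∈ ss, Hf (θ i) (arccot (hB.eigenvalues (σ i)))
      = sin (θ i) ^ 2 * hB.eigenvalues (σ i) - sin (θ i) * cos (θ i) := by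
    intro i _
    rw [Hf, cos_div_sin_arccot]
  rw [Finset.sum_congr rfl hHf]
  have hb2 : ∑ i ∈ ss, sin (θ i) ^ 2 * hB.eigenvalues (σ i)
      ≤ ∑ i ∈ ss, sin (θ i) ^ 2 * ((star U * B * U) i i).re := by
    have e1 := hrestr (fun i => hB.eigenvalues (σ i))
    have e2 := hrestr (fun i => ((star U * B * U) i i).re)
    calc ∑ i ∈ ss, sin (θ i) ^ 2 * hB.eigenvalues (σ i) = ∑ i, c i * hB.eigenvalues (σ i) :=
          e1.symm
      _ ≤ ∑ i, c i * ((star U * B * U) i i).re := hσ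
      _ = ∑ i ∈ ss, sin (θ i) ^ 2 * ((star U * B * U) i i).re := e2
  rw [Finset.sum_sub_distrib, Finset.sum_sub_distrib]
  linarith

set_option maxHeartbeats 1000000 in
theorem cot_Qfun_concave_hermitian (n k : ℕ) (hk : 1 ≤ k) (hkn : k ≤ n)
    (B B' : Matrix (Fin n) (Fin n) ℂ)
    (hB : B.IsHermitian) (hB' : B'.IsHermitian)
    (hΓB : (∑ i, arccot (hB.eigenvalues i)) < π)
    (hΓB' : (∑ i, arccot (hB'.eigenvalues i)) < π)
    (s : ℝ) (hs0 : 0 ≤ s) (hs1 : s ≤ 1)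
    (hC : (s • B + (1 - s) • B').IsHermitian) :
    s * Real.cot (Qfun n k hB.eigenvalues) + (1 - s) * Real.cot (Qfun n k hB'.eigenvalues) ≤
      Real.cot (Qfun n k hC.eigenvalues) := by
  have hn : 0 < n := lt_of_lt_of_le hk hkn
  haveI : NeZero n := ⟨hn.ne'⟩
  set U : Matrix (Fin n) (Fin n) ℂ := (hC.eigenvectorUnitary : Matrix (Fin n) (Fin n) ℂ)
    with hUdef
  have hU : U ∈ Matrix.unitaryGroup (Fin n) ℂ := (hC.eigenvectorUnitary).2
  -- diagonal entries of conjugated C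
  have hdiagC : ∀ i, ((star U * (s • B + (1 - s) • B') * U) i i).re = hC.eigenvalues i := by
    intro i
    have hsd : star U * (s • B + (1 - s) • B') * U
        = diagonal (RCLike.ofReal ∘ hC.eigenvalues) := by
      conv_lhs => rw [hC.spectral_theorem]
      rw [hUdef]
      calc star (hC.eigenvectorUnitary : Matrix (Fin n) (Fin n) ℂ)
            * ((hC.eigenvectorUnitary : Matrix (Fin n) (Fin n) ℂ)
              * diagonal (RCLike.ofReal ∘ hC.eigenvalues)
              * star (hC.eigenvectorUnitary : Matrix (Fin n) (Fin n) ℂ))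
            * (hC.eigenvectorUnitary : Matrix (Fin n) (Fin n) ℂ)
          = (star (hC.eigenvectorUnitary : Matrix (Fin n) (Fin n) ℂ)
              * (hC.eigenvectorUnitary : Matrix (Fin n) (Fin n) ℂ))
            * diagonal (RCLike.ofReal ∘ hC.eigenvalues)
            * (star (hC.eigenvectorUnitary : Matrix (Fin n) (Fin n) ℂ)
              * (hC.eigenvectorUnitary : Matrix (Fin n) (Fin n) ℂ)) := by
            simp only [Matrix.mul_assoc]
        _ = diagonal (RCLike.ofReal ∘ hC.eigenvalues) := by
            rw [Matrix.mem_unitaryGroup_iff'.mp (hC.eigenvectorUnitary).2]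
            simp
    rw [hsd]
    simp [Matrix.diagonal_apply_eq]
  have hdlin : ∀ i, ((star U * (s • B + (1 - s) • B') * U) i i).re
      = s * ((star U * B * U) i i).re + (1 - s) * ((star U * B' * U) i i).re := by
    intro i
    have hexp : star U * (s • B + (1 - s) • B') * U
        = s • (star U * B * U) + (1 - s) • (star U * B' * U) := by
      rw [Matrix.mul_add, Matrix.add_mul, Matrix.mul_smul, Matrix.smul_mul,
        Matrix.mul_smul, Matrix.smul_mul]
    rw [hexp]
    simp [Matrix.add_apply, Matrix.smul_apply, Complex.real_smul, Complex.mul_re]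
  -- Step 1: the segment stays in the region Γ
  have hGC : ∑ i, arccot (hC.eigenvalues i) < π := by
    by_contra hcon
    push_neg at hcon
    set θ : Fin n → ℝ := fun i => arccot (hC.eigenvalues i) with hθdef
    set G : ℝ := ∑ i, θ i with hGdef
    have hGpi : π ≤ G := hcon
    have hGpos : 0 < G := lt_of_lt_of_le Real.pi_pos hGpi
    set GB : ℝ := ∑ i, arccot (hB.eigenvalues i) with hGBdef
    set GB' : ℝ := ∑ i, arccot (hB'.eigenvalues i) with hGB'def
    set V0 : ℝ := s * (cos GB / sin GB) + (1 - s) * (cos GB' / sin GB') with hV0def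
    set Qt : ℝ := π / 2 - Real.arctan (V0 - 1) with hQtdef
    have hy1 := Real.arctan_lt_pi_div_two (V0 - 1)
    have hy2 := Real.neg_pi_div_two_lt_arctan (V0 - 1)
    have hQt1 : 0 < Qt := by rw [hQtdef]; linarith
    have hQt2 : Qt < π := by rw [hQtdef]; linarith [Real.pi_pos]
    have hsinQt : 0 < sin Qt := Real.sin_pos_of_pos_of_lt_pi hQt1 hQt2
    have hcotQt : cos Qt / sin Qt = V0 - 1 := by
      rw [hQtdef, Real.cos_pi_div_two_sub, Real.sin_pi_div_two_sub,
        ← Real.tan_eq_sin_div_cos, Real.tan_arctan]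
    set r : ℝ := Qt / G with hrdef
    have hr0 : 0 < r := div_pos hQt1 hGpos
    have hr1 : r < 1 := (div_lt_one hGpos).mpr (lt_of_lt_of_le hQt2 hGpi)
    set θt : Fin n → ℝ := fun i => r * θ i with hθtdef
    have hθmem : ∀ i, θ i ∈ Set.Ioo 0 π := fun i => arccot_mem _
    have hθt : ∀ i ∈ Finset.univ, θt i ∈ Set.Ioo 0 π := by
      intro i _
      have h1 := (hθmem i).1
      have h2 := (hθmem i).2
      simp only [hθtdef]
      constructor
      · exact mul_pos hr0 h1
      · nlinarith [mul_pos (sub_pos.mpr hr1) h1]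
    have hsθt : ∑ i, θt i = Qt := by
      rw [hθtdef]
      rw [← Finset.mul_sum, ← hGdef, hrdef]
      field_simp
    have huniv : (Finset.univ : Finset (Fin n)).Nonempty := Finset.univ_nonempty
    obtain ⟨JB, hJBcard, hcoreB⟩ := core U hU hB hΓB Finset.univ huniv θt hθt
      (by rw [hsθt]; exact hQt2)
    obtain ⟨JB', hJB'card, hcoreB'⟩ := core U hU hB' hΓB' Finset.univ huniv θt hθt
      (by rw [hsθt]; exact hQt2)
    have hJBuniv : JB = Finset.univ := Finset.eq_univ_of_card _ (by
      rw [hJBcard, Finset.card_univ])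
    have hJB'univ : JB' = Finset.univ := Finset.eq_univ_of_card _ (by
      rw [hJB'card, Finset.card_univ])
    rw [hJBuniv, hsθt] at hcoreB
    rw [hJB'univ, hsθt] at hcoreB'
    -- combine
    have hsum0 : s * (∑ i ∈ Finset.univ, (sin (θt i) ^ 2 * ((star U * B * U) i i).re
          - sin (θt i) * cos (θt i)))
        + (1 - s) * (∑ i ∈ Finset.univ, (sin (θt i) ^ 2 * ((star U * B' * U) i i).re
          - sin (θt i) * cos (θt i)))
        = ∑ i, (sin (θt i) ^ 2 * hC.eigenvalues i - sin (θt i) * cos (θt i)) := by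
      rw [Finset.mul_sum, Finset.mul_sum, ← Finset.sum_add_distrib]
      refine Finset.sum_congr rfl fun i _ => ?_
      have h1 := hdiagC i
      have h2 := hdlin i
      rw [← h1, h2]
      ring
    have hterm : ∀ i ∈ Finset.univ,
        sin (θt i) ^ 2 * hC.eigenvalues i - sin (θt i) * cos (θt i) ≤ 0 := by
      intro i _
      have hlam : hC.eigenvalues i = cos (θ i) / sin (θ i) := (cos_div_sin_arccot _).symm
      have hθti := hθt i (Finset.mem_univ i)
      have hle : θt i ≤ θ i := by simp only [hθtdef]; nlinarith [mul_nonneg (sub_nonneg.mpr hr1.le) (hθmem i).1.le]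
      have hcot := cot_anti hθti.1 (hθmem i).2 hle
      have hsθti : 0 < sin (θt i) := Real.sin_pos_of_pos_of_lt_pi hθti.1 hθti.2
      have h2 : sin (θt i) ^ 2 * (cos (θt i) / sin (θt i)) = sin (θt i) * cos (θt i) := by
        field_simp
      have h3 : sin (θt i) ^ 2 * hC.eigenvalues i
          ≤ sin (θt i) ^ 2 * (cos (θt i) / sin (θt i)) := by
        rw [hlam]
        exact mul_le_mul_of_nonneg_left hcot (sq_nonneg _)
      linarith
    have hsumle : ∑ i, (sin (θt i) ^ 2 * hC.eigenvalues i - sin (θt i) * cos (θt i)) ≤ 0 :=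
      Finset.sum_nonpos hterm
    have hHfB : Hf Qt GB = sin Qt ^ 2 * (cos GB / sin GB) - sin Qt * cos Qt := by rw [Hf]
    have hHfB' : Hf Qt GB' = sin Qt ^ 2 * (cos GB' / sin GB') - sin Qt * cos Qt := by rw [Hf]
    have hfinal : sin Qt ^ 2 * V0 - sin Qt * cos Qt ≤ 0 := by
      have c1 := mul_le_mul_of_nonneg_left hcoreB hs0
      have c2 := mul_le_mul_of_nonneg_left hcoreB' (by linarith : (0:ℝ) ≤ 1 - s)
      have : s * Hf Qt GB + (1 - s) * Hf Qt GB' ≤ 0 := by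
        calc s * Hf Qt GB + (1 - s) * Hf Qt GB' ≤ _ + _ := add_le_add c1 c2
          _ = ∑ i, (sin (θt i) ^ 2 * hC.eigenvalues i - sin (θt i) * cos (θt i)) := hsum0
          _ ≤ 0 := hsumle
      rw [hHfB, hHfB'] at this
      rw [hV0def]
      nlinarith
    have hcos : cos Qt = (V0 - 1) * sin Qt := by
      field_simp at hcotQt
      linarith [hcotQt]
    nlinarith [hfinal, hcos, sq_nonneg (sin Qt), hsinQt]
  -- Step 2: main argument
  obtain ⟨Jstar, hJcard, hQC⟩ := exists_Qfun n k hkn hC.eigenvalues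
  have hJne : Jstar.Nonempty := Finset.card_pos.mp (by rw [hJcard]; exact hk)
  set θ : Fin n → ℝ := fun i => arccot (hC.eigenvalues i) with hθdef
  have hθmem : ∀ i, θ i ∈ Set.Ioo 0 π := fun i => arccot_mem _
  set Q : ℝ := Qfun n k hC.eigenvalues with hQdef
  have hQsum : Q = ∑ i ∈ Jstar, θ i := hQC
  have hQlt : Q < π := by
    rw [hQsum]
    calc ∑ i ∈ Jstar, θ i ≤ ∑ i, θ i := Finset.sum_le_sum_of_subset_of_nonneg
          (Finset.subset_univ _) (fun i _ _ => (hθmem i).1.le)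
      _ < π := hGC
  have hQpos : 0 < Q := by
    rw [hQsum]
    exact Finset.sum_pos (fun i _ => (hθmem i).1) hJne
  have hsinQ : 0 < sin Q := Real.sin_pos_of_pos_of_lt_pi hQpos hQlt
  have hθcond : ∀ i ∈ Jstar, θ i ∈ Set.Ioo 0 π := fun i _ => hθmem i
  have hsθ : ∑ i ∈ Jstar, θ i < π := by rw [← hQsum]; exact hQlt
  obtain ⟨JB, hJBcard, hcoreB⟩ := core U hU hB hΓB Jstar hJne θ hθcond hsθ
  obtain ⟨JB', hJB'card, hcoreB'⟩ := core U hU hB' hΓB' Jstar hJne θ hθcond hsθ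
  rw [← hQsum] at hcoreB hcoreB'
  -- properties of P_B and Qfun B
  have harccot_pos : ∀ x : ℝ, 0 < arccot x := fun x => (arccot_mem x).1
  have hQfun_lt : ∀ (M : Matrix (Fin n) (Fin n) ℂ) (hM : M.IsHermitian),
      (∑ i, arccot (hM.eigenvalues i)) < π → Qfun n k hM.eigenvalues < π := by
    intro M hM hGM
    obtain ⟨J0, hJ0card, hJ0⟩ := exists_Qfun n k hkn hM.eigenvalues
    rw [hJ0]
    calc ∑ i ∈ J0, arccot (hM.eigenvalues i) ≤ ∑ i, arccot (hM.eigenvalues i) :=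
          Finset.sum_le_sum_of_subset_of_nonneg (Finset.subset_univ _)
            (fun i _ _ => (harccot_pos _).le)
      _ < π := hGM
  have hcotstep : ∀ (M : Matrix (Fin n) (Fin n) ℂ) (hM : M.IsHermitian)
      (J : Finset (Fin n)), J.card = k → (∑ i, arccot (hM.eigenvalues i)) < π →
      cos (Qfun n k hM.eigenvalues) / sin (Qfun n k hM.eigenvalues)
        ≤ cos (∑ j ∈ J, arccot (hM.eigenvalues j)) / sin (∑ j ∈ J, arccot (hM.eigenvalues j)) := by
    intro M hM J hJcard' hGM
    have hJne' : J.Nonempty := Finset.card_pos.mp (by rw [hJcard']; exact hk)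
    have hPpos : 0 < ∑ j ∈ J, arccot (hM.eigenvalues j) :=
      Finset.sum_pos (fun j _ => harccot_pos _) hJne'
    exact cot_anti hPpos (hQfun_lt M hM hGM) (le_Qfun n k hkn hM.eigenvalues J hJcard')
  have hcotB := hcotstep B hB JB (by rw [hJBcard, hJcard]) hΓB
  have hcotB' := hcotstep B' hB' JB' (by rw [hJB'card, hJcard]) hΓB'
  -- Hf is antitone in second argument via cot
  have hHfB : sin Q ^ 2 * (cos (Qfun n k hB.eigenvalues) / sin (Qfun n k hB.eigenvalues))
      - sin Q * cos Q ≤ ∑ i ∈ Jstar, (sin (θ i) ^ 2 * ((star U * B * U) i i).re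
        - sin (θ i) * cos (θ i)) := by
    refine le_trans ?_ hcoreB
    rw [Hf]
    have := mul_le_mul_of_nonneg_left hcotB (sq_nonneg (sin Q))
    linarith
  have hHfB' : sin Q ^ 2 * (cos (Qfun n k hB'.eigenvalues) / sin (Qfun n k hB'.eigenvalues))
      - sin Q * cos Q ≤ ∑ i ∈ Jstar, (sin (θ i) ^ 2 * ((star U * B' * U) i i).re
        - sin (θ i) * cos (θ i)) := by
    refine le_trans ?_ hcoreB'
    rw [Hf]
    have := mul_le_mul_of_nonneg_left hcotB' (sq_nonneg (sin Q))
    linarith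
  -- the tangent-point sum vanishes
  have hsum0 : s * (∑ i ∈ Jstar, (sin (θ i) ^ 2 * ((star U * B * U) i i).re
        - sin (θ i) * cos (θ i)))
      + (1 - s) * (∑ i ∈ Jstar, (sin (θ i) ^ 2 * ((star U * B' * U) i i).re
        - sin (θ i) * cos (θ i))) = 0 := by
    rw [Finset.mul_sum, Finset.mul_sum, ← Finset.sum_add_distrib]
    apply Finset.sum_eq_zero
    intro i _
    have h1 := hdiagC i
    have h2 := hdlin i
    have hlam : hC.eigenvalues i = cos (θ i) / sin (θ i) := (cos_div_sin_arccot _).symm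
    have hsθi : 0 < sin (θ i) := Real.sin_pos_of_pos_of_lt_pi (hθmem i).1 (hθmem i).2
    have h3 : sin (θ i) ^ 2 * hC.eigenvalues i = sin (θ i) * cos (θ i) := by
      rw [hlam]
      field_simp
    have h4 : s * ((star U * B * U) i i).re + (1 - s) * ((star U * B' * U) i i).re
        = hC.eigenvalues i := by rw [← h2, h1]
    nlinarith [h3, h4]
  -- combine
  have hc1 := mul_le_mul_of_nonneg_left hHfB hs0
  have hc2 := mul_le_mul_of_nonneg_left hHfB' (by linarith : (0:ℝ) ≤ 1 - s)
  have hfinal : sin Q ^ 2 * (s * (cos (Qfun n k hB.eigenvalues) / sin (Qfun n k hB.eigenvalues))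
      + (1 - s) * (cos (Qfun n k hB'.eigenvalues) / sin (Qfun n k hB'.eigenvalues)))
      - sin Q * cos Q ≤ 0 := by nlinarith [hc1, hc2, hsum0]
  rw [Real.cot_eq_cos_div_sin, Real.cot_eq_cos_div_sin, Real.cot_eq_cos_div_sin]
  have hdiv : s * (cos (Qfun n k hB.eigenvalues) / sin (Qfun n k hB.eigenvalues))
      + (1 - s) * (cos (Qfun n k hB'.eigenvalues) / sin (Qfun n k hB'.eigenvalues))
      ≤ cos Q / sin Q := by
    rw [le_div_iff₀ hsinQ]
    nlinarith [hfinal, hsinQ]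
  exact hdiv
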